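/- For every integer n ≥ 2, the function h_n(t) = t^{2n−3}·( −t²/(2n−2) + ((2n−1)/(4n−4))·t − 1/2 ) is strictly decreasing on the interval (0,1). -/

import Mathlib

/-- `h_n(t) = t^{2n-3}·(-t²/(2n-2) + ((2n-1)/(4n-4))·t - 1/2)`, the `t`-dependent term
appearing in the evaluation of `g_n` at its critical points. -/
noncomputable def hFun (n : ℕ) (t : ℝ) : ℝ :=
  t ^ (2 * n - 3) *
    (-t ^ 2 / (2 * (n : ℝ) - 2) + ((2 * (n : ℝ) - 1) / (4 * (n : ℝ) - 4)) * t - 1 / 2)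

/-- For every integer `n ≥ 2`, the function `h_n` is strictly decreasing on `(0,1)`. -/
theorem hFun_strictAntiOn (n : ℕ) (hn : 2 ≤ n) :
    StrictAntiOn (hFun n) (Set.Ioo (0 : ℝ) 1) := by
  obtain ⟨m, rfl⟩ : ∃ m, n = m + 2 := ⟨n - 2, by omega⟩
  have hM0 : (0:ℝ) ≤ (m:ℝ) := Nat.cast_nonneg m
  set M : ℝ := (m : ℝ) with hM
  have hC : (0:ℝ) < 2*M + 2 := by linarith
  have hE : (0:ℝ) < 4*M + 4 := by linarith
  have hfun_eq : hFun (m+2) = fun t : ℝ =>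
      t ^ (2*m+1) * (-t^2/(2*M+2) + ((2*M+3)/(4*M+4))*t - 1/2) := by
    funext t
    simp only [hFun]
    have h3 : 2*(m+2) - 3 = 2*m+1 := by omega
    rw [h3, hM]
    push_cast
    ring_nf
  rw [hfun_eq]
  apply strictAntiOn_of_deriv_neg (convex_Ioo 0 1)
  · apply Continuous.continuousOn
    fun_prop
  · intro x hx
    rw [interior_Ioo] at hx
    obtain ⟨hx0, hx1⟩ := hx
    have h1 : HasDerivAt (fun t : ℝ => t ^ (2*m+1)) (((2*m+1 : ℕ) : ℝ) * x^(2*m)) x := by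
      simpa using hasDerivAt_pow (2*m+1) x
    have h2 : HasDerivAt (fun t : ℝ => -t^2/(2*M+2) + ((2*M+3)/(4*M+4))*t - 1/2)
        (-(2*x)/(2*M+2) + (2*M+3)/(4*M+4)) x := by
      have a : HasDerivAt (fun t : ℝ => -t^2/(2*M+2)) (-(2*x)/(2*M+2)) x := by
        have := ((hasDerivAt_pow 2 x).neg.div_const (2*M+2))
        simpa using this
      have b : HasDerivAt (fun t : ℝ => ((2*M+3)/(4*M+4))*t) ((2*M+3)/(4*M+4)) x :=
        by simpa using (hasDerivAt_id x).const_mul ((2*M+3)/(4*M+4))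
      simpa using (a.add b).sub_const (1/2 : ℝ)
    rw [(show HasDerivAt (fun t : ℝ => t ^ (2*m+1) * (-t^2/(2*M+2) + ((2*M+3)/(4*M+4))*t - 1/2)) _ x from h1.mul h2).deriv]
    have hxp : 0 < x ^ (2*m) := pow_pos hx0 _
    set q : ℝ := -x^2/(2*M+2) + ((2*M+3)/(4*M+4))*x - 1/2 with hq
    set q' : ℝ := -(2*x)/(2*M+2) + (2*M+3)/(4*M+4) with hq'
    have hneg : -2*(2*M+3)*x^2 + (2*M+3)*(2*M+2)*x - (2*M+1)*(2*M+2) < 0 := by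
      nlinarith [mul_pos hx0 (sub_pos.mpr hx1), sq_nonneg (x - 1),
        mul_nonneg hM0 (sq_nonneg (1-x)), mul_nonneg hM0 (mul_pos hx0 (sub_pos.mpr hx1)).le,
        mul_nonneg hM0 hM0]
    have hprod : ((2*M+1) * q + x * q') * (4*M+4)
        = -2*(2*M+3)*x^2 + (2*M+3)*(2*M+2)*x - (2*M+1)*(2*M+2) := by
      rw [hq, hq']
      field_simp
      ring
    have key : (2*M+1) * q + x * q' < 0 := by
      have heq : (2*M+1) * q + x * q'
          = (-2*(2*M+3)*x^2 + (2*M+3)*(2*M+2)*x - (2*M+1)*(2*M+2)) / (4*M+4) :=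
        eq_div_of_mul_eq hE.ne' hprod
      rw [heq]
      exact div_neg_of_neg_of_pos hneg hE
    have hrw : ((2*m+1 : ℕ) : ℝ) * x^(2*m) * q + x^(2*m+1) * q'
        = x^(2*m) * ((2*M+1) * q + x * q') := by
      rw [pow_succ]
      push_cast
      ring
    rw [hrw]
    exact mul_neg_of_pos_of_neg hxp key
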